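/- arXiv:2406.20045 — 2 statements merged into one kernel-verified Lean document; each statement's English description precedes it below -/
import Mathlib

section
/- In any single-winner instant-runoff election, adding ballots on which the original winner W is ranked first cannot change the winner: if W wins (P,1) and P' is obtained from P by adding identical ballots ranking W first, then W wins (P',1). -/
section IRV

variable {C : Type*} [DecidableEq C] [LinearOrder C]

/-- The highest-ranked candidate on ballot `b` who is still remaining. -/
def topChoice (rem : Finset C) (b : List C) : Option C := b.find? (· ∈ rem)

/-- The current vote total of candidate `c`: the number of ballots in `P` whose
highest-ranked remaining candidate is `c` (ballots ranking no remaining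
candidate are exhausted). -/
def score (P : List (List C)) (rem : Finset C) (c : C) : ℕ :=
  (P.filter (fun b => topChoice rem b = some c)).length

/-- The candidate eliminated this round: a remaining candidate with the fewest
current votes, with ties broken deterministically by the linear order on `C`. -/
def loser (P : List (List C)) (rem : Finset C) (h : rem.Nonempty) : C :=
  (rem.filter (fun c => ∀ d ∈ rem, score P rem c ≤ score P rem d)).min'
    (by
      obtain ⟨c, hc, hmin⟩ := rem.exists_min_image (score P rem) h
      exact ⟨c, Finset.mem_filter.mpr ⟨hc, hmin⟩⟩)

theorem loser_mem (P : List (List C)) (rem : Finset C) (h : rem.Nonempty) :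
    loser P rem h ∈ rem :=
  Finset.filter_subset _ _ (Finset.min'_mem _ _)

/-- The IRV winner among the remaining candidates: repeatedly eliminate the
remaining candidate with the fewest current votes (transferring their ballots to
the next remaining ranked candidate) until a single candidate remains. -/
noncomputable def irvWinner (P : List (List C)) (rem : Finset C) : Option C :=
  if h : 1 < rem.card then
    irvWinner P (rem.erase (loser P rem (Finset.card_pos.mp (by omega))))
  else rem.toList.head?
termination_by rem.card
decreasing_by exact Finset.card_erase_lt_of_mem (loser_mem _ _ _)

set_option linter.unusedSectionVars false

-- Lemma 1
theorem irvWinner_mem (P : List (List C)) (rem : Finset C) (c : C)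
    (h : irvWinner P rem = some c) : c ∈ rem := by
  induction rem using Finset.strongInduction with
  | _ rem ih =>
    rw [irvWinner] at h
    split at h
    · next h1 =>
      have := ih _ (Finset.erase_ssubset (loser_mem P rem _)) h
      exact Finset.mem_of_mem_erase this
    · have : c ∈ rem.toList := by
        cases hl : rem.toList with
        | nil => simp [hl] at h
        | cons a t => simp [hl] at h; simp [hl, h]
      simpa using this

-- Lemma 2: score formula
theorem score_append (P : List (List C)) (rem : Finset C) (W : C) (hW : W ∈ rem)
    (b : List C) (hb : b.head? = some W) (k : ℕ) (c : C) :
    score (P ++ List.replicate k b) rem c = score P rem c + if c = W then k else 0 := by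
  have htop : topChoice rem b = some W := by
    cases b with
    | nil => simp at hb
    | cons a t =>
      simp at hb
      subst hb
      simp [topChoice, List.find?_cons_of_pos, hW]
  unfold score
  rw [List.filter_append, List.length_append]
  congr 1
  by_cases hc : c = W
  · subst hc
    simp [htop, List.filter_replicate]
  · have : topChoice rem b = some c ↔ False := by simp [htop, Ne.symm hc, hc]
    simp [List.filter_replicate, htop, hc, Ne.symm hc]


theorem loser_append (P : List (List C)) (rem : Finset C) (h : rem.Nonempty)
    (W : C) (hW : W ∈ rem) (b : List C) (hb : b.head? = some W) (k : ℕ)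
    (hL : loser P rem h ≠ W) :
    loser (P ++ List.replicate k b) rem h = loser P rem h := by
  set P' := P ++ List.replicate k b with hP'
  have hsc : ∀ c, score P' rem c = score P rem c + if c = W then k else 0 :=
    fun c => score_append P rem W hW b hb k c
  set L := loser P rem h with hLdef
  have hLmem : L ∈ rem.filter (fun c => ∀ d ∈ rem, score P rem c ≤ score P rem d) :=
    Finset.min'_mem _ _
  rw [Finset.mem_filter] at hLmem
  obtain ⟨hLrem, hLmin⟩ := hLmem
  unfold loser
  apply le_antisymm
  · -- min' of filter' ≤ L : L ∈ filter'
    apply Finset.min'_le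
    rw [Finset.mem_filter]
    refine ⟨hLrem, fun d hd => ?_⟩
    rw [hsc, hsc]
    simp only [hL, if_false, add_zero]
    exact le_trans (hLmin d hd) (Nat.le_add_right _ _)
  · -- L ≤ every element of filter'
    apply Finset.le_min'
    intro c hc
    rw [Finset.mem_filter] at hc
    obtain ⟨hcrem, hcmin⟩ := hc
    by_cases hcW : c = W
    · subst hcW
      have h1 := hcmin L hLrem
      rw [hsc, hsc] at h1
      simp only [hL, if_false, if_true, add_zero, if_pos rfl] at h1
      have h2 := hLmin c hcrem
      have hk : k = 0 := by omega
      have heq : score P rem c = score P rem L := by omega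
      apply Finset.min'_le
      rw [Finset.mem_filter]
      exact ⟨hcrem, fun d hd => heq ▸ hLmin d hd⟩
    · have h1 := hcmin L hLrem
      rw [hsc, hsc] at h1
      simp only [hcW, hL, if_false, add_zero] at h1
      apply Finset.min'_le
      rw [Finset.mem_filter]
      refine ⟨hcrem, fun d hd => ?_⟩
      exact le_trans h1 (hLmin d hd)

theorem irv_pos_aux (P : List (List C)) (W : C) (b : List C) (hb : b.head? = some W)
    (k : ℕ) : ∀ rem : Finset C, W ∈ rem → irvWinner P rem = some W →
    irvWinner (P ++ List.replicate k b) rem = some W := by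
  intro rem
  induction rem using Finset.strongInduction with
  | _ rem ih =>
    intro hWrem hwin
    rw [irvWinner] at hwin ⊢
    by_cases h1 : 1 < rem.card
    · rw [dif_pos h1] at hwin ⊢
      have hne : rem.Nonempty := Finset.card_pos.mp (by omega)
      set L := loser P rem hne with hLdef
      have hLW : L ≠ W := by
        intro hEq
        have := irvWinner_mem P _ _ hwin
        rw [hEq] at this
        exact (Finset.notMem_erase W rem) this
      have hls : loser (P ++ List.replicate k b) rem hne = L :=
        loser_append P rem hne W hWrem b hb k hLW
      rw [hls]
      exact ih _ (Finset.erase_ssubset (loser_mem P rem hne))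
        (Finset.mem_erase.mpr ⟨Ne.symm hLW, hWrem⟩) hwin
    · rw [dif_neg h1] at hwin ⊢
      exact hwin

end IRV

/-- In a single-winner instant-runoff election, adding identical ballots on
which the original winner `W` is ranked first cannot change the winner. -/
theorem irv_positive_involvement {C : Type*} [DecidableEq C] [LinearOrder C] [Fintype C]
    (P : List (List C)) (W : C) (b : List C) (hb : b.head? = some W) (k : ℕ)
    (hW : irvWinner P Finset.univ = some W) :
    irvWinner (P ++ List.replicate k b) Finset.univ = some W :=
  irv_pos_aux P W b hb k Finset.univ (Finset.mem_univ W) hW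
end

section
/- In a single-winner IRV election with candidate set containing W, suppose P' is obtained from P by adding k identical ballots ranking W first. Then in every round of the election on P' before W is elected or is the unique survivor, the set of eliminated candidates is the same as in the corresponding round on P, or W's vote total in that round is at least its total in P plus k. In particular, W's first-round vote total in P' equals its first-round total in P plus k. -/
section Rounds

variable {C : Type*} [DecidableEq C] [LinearOrder C]

/-- The set of candidates remaining after `n` rounds of IRV elimination. -/
noncomputable def remAfter (P : List (List C)) (rem : Finset C) : ℕ → Finset C
  | 0 => rem
  | n + 1 =>
    let r := remAfter P rem n
    if h : 1 < r.card then r.erase (loser P r (Finset.card_pos.mp (by omega))) else r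

end Rounds

set_option linter.unusedSectionVars false

section Aux
variable {C : Type*} [DecidableEq C] [LinearOrder C]

lemma topChoice_mem {rem : Finset C} {b : List C} {c : C} (h : topChoice rem b = some c) :
    c ∈ rem := by
  have := List.find?_some h
  simpa using this

lemma score_append_s17 (P Q : List (List C)) (rem : Finset C) (c : C) :
    score (P ++ Q) rem c = score P rem c + score Q rem c := by
  simp [score, List.filter_append]

lemma topChoice_head {rem : Finset C} {b : List C} {W : C} (hb : b.head? = some W)
    (hW : W ∈ rem) : topChoice rem b = some W := by
  cases b with
  | nil => simp at hb
  | cons a t =>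
    simp at hb
    subst hb
    simp [topChoice, List.find?_cons_of_pos, hW]

lemma score_add_k {P : List (List C)} {W : C} {b : List C} (hb : b.head? = some W) (k : ℕ)
    {rem : Finset C} (hW : W ∈ rem) :
    score (P ++ List.replicate k b) rem W = score P rem W + k := by
  rw [score_append_s17]
  congr 1
  simp [score, List.filter_replicate, topChoice_head hb hW]

lemma score_other {P : List (List C)} {W : C} {b : List C} (hb : b.head? = some W) (k : ℕ)
    {rem : Finset C} (hW : W ∈ rem) {c : C} (hc : c ≠ W) :
    score (P ++ List.replicate k b) rem c = score P rem c := by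
  rw [score_append_s17]
  have h0 : score (List.replicate k b) rem c = 0 := by
    simp [score, List.filter_replicate, topChoice_head hb hW, hc.symm]
  omega

noncomputable def step (Q : List (List C)) (r : Finset C) : Finset C :=
  if h : 1 < r.card then r.erase (loser Q r (Finset.card_pos.mp (by omega))) else r

lemma remAfter_succ (Q : List (List C)) (rem : Finset C) (n : ℕ) :
    remAfter Q rem (n + 1) = step Q (remAfter Q rem n) := rfl

lemma step_pos (Q : List (List C)) (r : Finset C) (h : 1 < r.card) (hne : r.Nonempty) :
    step Q r = r.erase (loser Q r hne) := by
  rw [step, dif_pos h]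

lemma step_neg (Q : List (List C)) (r : Finset C) (h : ¬ 1 < r.card) :
    step Q r = r := by
  rw [step, dif_neg h]

lemma remAfter_succ_subset (P : List (List C)) (rem : Finset C) (n : ℕ) :
    remAfter P rem (n + 1) ⊆ remAfter P rem n := by
  rw [remAfter_succ, step]
  split
  · exact Finset.erase_subset _ _
  · exact subset_rfl

lemma loser_eq {P P' : List (List C)} {W : C} {b : List C} (hb : b.head? = some W) (k : ℕ)
    (hP' : P' = P ++ List.replicate k b)
    {rem : Finset C} (hW : W ∈ rem) (h : rem.Nonempty)
    (hL : loser P rem h ≠ W) (hL' : loser P' rem h ≠ W) :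
    loser P' rem h = loser P rem h := by
  subst hP'
  set s := score P rem with hs
  set s' := score (P ++ List.replicate k b) rem with hs'
  have hsW : s' W = s W + k := score_add_k hb k hW
  have hsc : ∀ c, c ≠ W → s' c = s c := fun c hc => score_other hb k hW hc
  set L := loser P rem h with hLd
  set L' := loser (P ++ List.replicate k b) rem h with hL'd
  have hLmem := loser_mem P rem h
  have hL'mem := loser_mem (P ++ List.replicate k b) rem h
  have hLfilt : L ∈ rem.filter (fun c => ∀ d ∈ rem, s c ≤ s d) := Finset.min'_mem _ _
  have hL'filt : L' ∈ rem.filter (fun c => ∀ d ∈ rem, s' c ≤ s' d) := Finset.min'_mem _ _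
  have hLmin : ∀ d ∈ rem, s L ≤ s d := (Finset.mem_filter.mp hLfilt).2
  have hL'min : ∀ d ∈ rem, s' L' ≤ s' d := (Finset.mem_filter.mp hL'filt).2
  -- L ∈ filter for P'
  have hLfilt' : L ∈ rem.filter (fun c => ∀ d ∈ rem, s' c ≤ s' d) := by
    refine Finset.mem_filter.mpr ⟨hLmem, fun d hd => ?_⟩
    rcases eq_or_ne d W with rfl | hdW
    · rw [hsc L hL, hsW]
      have := hLmin d hW
      omega
    · rw [hsc L hL, hsc d hdW]
      exact hLmin d hd
  -- L' ∈ filter for P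
  have hL'L : s L' ≤ s L := by
    have := hL'min L hLmem
    rwa [hsc L' hL', hsc L hL] at this
  have hL'filtP : L' ∈ rem.filter (fun c => ∀ d ∈ rem, s c ≤ s d) := by
    refine Finset.mem_filter.mpr ⟨hL'mem, fun d hd => ?_⟩
    exact le_trans hL'L (hLmin d hd)
  have h1 : L' ≤ L := Finset.min'_le _ _ hLfilt'
  have h2 : L ≤ L' := Finset.min'_le _ _ hL'filtP
  exact le_antisymm h1 h2

lemma invariant {C : Type*} [DecidableEq C] [LinearOrder C] [Fintype C]
    (P : List (List C)) (W : C) (b : List C) (hb : b.head? = some W) (k : ℕ) :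
    ∀ n, W ∈ remAfter (P ++ List.replicate k b) Finset.univ n →
      remAfter (P ++ List.replicate k b) Finset.univ n = remAfter P Finset.univ n ∨
      W ∉ remAfter P Finset.univ n := by
  intro n
  induction n with
  | zero => intro _; left; rfl
  | succ n ih =>
    intro hWn1
    have hWn : W ∈ remAfter (P ++ List.replicate k b) Finset.univ n :=
      remAfter_succ_subset _ _ n hWn1
    rcases ih hWn with heq | hout
    · -- same remaining sets at round n
      set r := remAfter P Finset.univ n with hr
      by_cases hcard : 1 < r.card
      · have hne : r.Nonempty := Finset.card_pos.mp (by omega)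
        have hP'step : remAfter (P ++ List.replicate k b) Finset.univ (n+1) =
            r.erase (loser (P ++ List.replicate k b) r hne) := by
          rw [remAfter_succ, heq, step_pos _ _ hcard hne]
        have hPstep : remAfter P Finset.univ (n+1) = r.erase (loser P r hne) := by
          rw [remAfter_succ, step_pos _ _ hcard hne]
        have hWr : W ∈ r := heq ▸ hWn
        have hL' : loser (P ++ List.replicate k b) r hne ≠ W := by
          intro hLW
          rw [hP'step, hLW] at hWn1
          exact (Finset.notMem_erase W r) hWn1
        by_cases hL : loser P r hne = W
        · right
          rw [hPstep, hL]
          exact Finset.notMem_erase W r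
        · left
          rw [hP'step, hPstep, loser_eq hb k rfl hWr hne hL hL']
      · have hP'step : remAfter (P ++ List.replicate k b) Finset.univ (n+1) = r := by
          rw [remAfter_succ, heq, step_neg _ _ hcard]
        have hPstep : remAfter P Finset.univ (n+1) = r := by
          rw [remAfter_succ, step_neg _ _ hcard]
        left; rw [hP'step, hPstep]
    · right
      intro hmem
      exact hout (remAfter_succ_subset P Finset.univ n hmem)

end Aux

/-- Let `P'` be obtained from `P` by adding `k` identical ballots ranking `W`
first.  Then in every round of the election on `P'` in which `W` is still
remaining and more than one candidate remains (i.e. before `W` is elected or is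
the unique survivor), either the set of remaining (equivalently, eliminated)
candidates is the same as in the corresponding round on `P`, or `W`'s vote total
in that round is at least its total in the corresponding round on `P` plus `k`.
In particular, `W`'s first-round total on `P'` equals its first-round total on
`P` plus `k`. -/
theorem irv_rounds_added_topW {C : Type*} [DecidableEq C] [LinearOrder C] [Fintype C]
    (P : List (List C)) (W : C) (b : List C) (hb : b.head? = some W) (k : ℕ) :
    (∀ n : ℕ, W ∈ remAfter (P ++ List.replicate k b) Finset.univ n →
        1 < (remAfter (P ++ List.replicate k b) Finset.univ n).card →
        remAfter (P ++ List.replicate k b) Finset.univ n = remAfter P Finset.univ n ∨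
        score P (remAfter P Finset.univ n) W + k ≤
          score (P ++ List.replicate k b) (remAfter (P ++ List.replicate k b) Finset.univ n) W) ∧
    score (P ++ List.replicate k b) Finset.univ W = score P Finset.univ W + k := by
  constructor
  · intro n hW _
    rcases invariant P W b hb k n hW with heq | hout
    · exact Or.inl heq
    · right
      have h1 : score P (remAfter P Finset.univ n) W = 0 := by
        simp only [score, List.length_eq_zero_iff, List.filter_eq_nil_iff]
        intro a _ h
        exact hout (topChoice_mem (by simpa using h))
      rw [h1, score_add_k hb k hW]
      omega
  · exact score_add_k hb k (Finset.mem_univ W)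
end
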